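/- (Necessity of FdB via characteristic series.) Let m be a weight and suppose η(x) = Σ_{n≥1} i^{n-1} s_n x^n is a formal power series with s_n ≥ m_n > 0 for all n. Then the n-th coefficient of η∘η equals i^{n-1} Σ_{r≥1} Σ_{n_1+⋯+n_r=n, n_i≥1} s_r s_{n_1}⋯s_{n_r}; in particular |(η∘η)_n| ≥ Σ_{r≥1} Σ_{n_1+⋯+n_r=n} m_r m_{n_1}⋯m_{n_r}, so if sup_n (|(η∘η)_n|/m_n)^{1/n} < ∞ then m is FdB. -/

import Mathlib

open Finset

/-- Necessity of the FdB condition via characteristic series: if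
`η_n = i^{n-1} s_n` with `s_n ≥ m_n > 0`, then the coefficients of `η ∘ η`
have absolute values at least `Σ m_r m_{n₁} ⋯ m_{n_r}`, and their weighted
growth being exponentially bounded forces `m` to be FdB. -/
theorem stmt_16 (m : ℕ → ℝ) (hm : ∀ n, 1 ≤ n → 0 < m n)
    (s : ℕ → ℝ) (hs : ∀ n, 1 ≤ n → m n ≤ s n)
    (η : ℕ → ℂ) (hη : ∀ n, 1 ≤ n → η n = Complex.I ^ (n - 1) * (s n : ℂ))
    (c : ℕ → ℂ)
    (hc : ∀ n : ℕ, c n = ∑ p : Composition n, η p.length * ∏ i, η (p.blocksFun i)) :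
    (∀ n, 1 ≤ n → c n = Complex.I ^ (n - 1) *
      ((∑ p : Composition n, s p.length * ∏ i, s (p.blocksFun i) : ℝ) : ℂ)) ∧
    (∀ n, 1 ≤ n →
      (∑ p : Composition n, m p.length * ∏ i, m (p.blocksFun i)) ≤
        ‖c n‖) ∧
    ((∃ C : ℝ, ∀ n, 1 ≤ n → (‖c n‖ / m n) ^ (1 / (n : ℝ)) ≤ C) →
      ∃ lam : ℝ, 1 ≤ lam ∧ ∀ ks : List ℕ, ks ≠ [] → (∀ i ∈ ks, 1 ≤ i) →
        m ks.length * (ks.map m).prod ≤ lam ^ ks.sum * m ks.sum) := by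
  -- Part 1
  have h1 : ∀ n, 1 ≤ n → c n = Complex.I ^ (n - 1) *
      ((∑ p : Composition n, s p.length * ∏ i, s (p.blocksFun i) : ℝ) : ℂ) := by
    intro n hn
    rw [hc n]
    push_cast
    rw [Finset.mul_sum]
    refine Finset.sum_congr rfl fun p _ => ?_
    have hlen : 1 ≤ p.length := p.length_pos_of_pos hn
    have hlenle : p.length ≤ n := p.length_le
    have hsum : ∑ i, p.blocksFun i = n := p.sum_blocksFun
    have key : ∑ i, (p.blocksFun i - 1) + p.length = n := by
      have h3 : ∑ i : Fin p.length, ((p.blocksFun i - 1) + 1) = ∑ i, p.blocksFun i :=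
        Finset.sum_congr rfl fun i _ => Nat.sub_add_cancel (p.one_le_blocksFun i)
      rw [Finset.sum_add_distrib] at h3
      simpa [hsum] using h3
    have hterm : ∀ i : Fin p.length, η (p.blocksFun i) =
        Complex.I ^ (p.blocksFun i - 1) * (s (p.blocksFun i) : ℂ) :=
      fun i => hη _ (p.one_le_blocksFun i)
    rw [hη _ hlen]
    calc (Complex.I ^ (p.length - 1) * (s p.length : ℂ)) *
          ∏ i, η (p.blocksFun i)
        = (Complex.I ^ (p.length - 1) * Complex.I ^ (∑ i, (p.blocksFun i - 1))) *
          ((s p.length : ℂ) * ∏ i, (s (p.blocksFun i) : ℂ)) := by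
          rw [Finset.prod_congr rfl fun i _ => hterm i, Finset.prod_mul_distrib,
            Finset.prod_pow_eq_pow_sum]
          ring
      _ = Complex.I ^ (n - 1) * ((s p.length : ℂ) * ∏ i, (s (p.blocksFun i) : ℂ)) := by
          rw [← pow_add]
          congr 2
          omega
  -- nonnegativity of terms
  have hnonneg : ∀ n, 1 ≤ n → ∀ p : Composition n,
      0 ≤ m p.length * ∏ i, m (p.blocksFun i) := by
    intro n hn p
    exact mul_nonneg (hm _ (p.length_pos_of_pos hn)).le
      (Finset.prod_nonneg fun i _ => (hm _ (p.one_le_blocksFun i)).le)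
  have habs : ∀ n, 1 ≤ n →
      (∑ p : Composition n, m p.length * ∏ i, m (p.blocksFun i)) ≤ ‖c n‖ := by
    intro n hn
    rw [h1 n hn, norm_mul, norm_pow, Complex.norm_I, one_pow, one_mul, Complex.norm_real,
      Real.norm_eq_abs]
    refine le_trans ?_ (le_abs_self _)
    refine Finset.sum_le_sum fun p _ => ?_
    have hl := p.length_pos_of_pos hn
    exact mul_le_mul (hs _ hl)
      (Finset.prod_le_prod (fun i _ => (hm _ (p.one_le_blocksFun i)).le)
        (fun i _ => hs _ (p.one_le_blocksFun i)))
      (Finset.prod_nonneg fun i _ => (hm _ (p.one_le_blocksFun i)).le)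
      (le_trans (hm _ hl).le (hs _ hl))
  refine ⟨h1, habs, ?_⟩
  rintro ⟨C, hC⟩
  have hC0 : 0 ≤ C :=
    le_trans (Real.rpow_nonneg (div_nonneg (norm_nonneg _) (hm 1 le_rfl).le) _)
      (hC 1 le_rfl)
  refine ⟨max C 1, le_max_right _ _, fun ks hne hpos => ?_⟩
  set n := ks.sum with hn
  have hn1 : 1 ≤ n := by
    cases ks with
    | nil => exact absurd rfl hne
    | cons a t =>
      have := hpos a (List.mem_cons_self)
      simp only [hn, List.sum_cons]; omega
  set p : Composition n := ⟨ks, fun {i} hi => hpos i hi, rfl⟩ with hp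
  have hprod : (ks.map m).prod = ∏ i, m (p.blocksFun i) := by
    rw [← List.prod_ofFn]
    congr 1
    show List.map m ks = List.ofFn (m ∘ p.blocksFun)
    rw [← List.map_ofFn, Composition.ofFn_blocksFun]
  have hterm : m ks.length * (ks.map m).prod ≤
      ∑ q : Composition n, m q.length * ∏ i, m (q.blocksFun i) := by
    rw [hprod]
    exact Finset.single_le_sum (fun q _ => hnonneg n hn1 q) (Finset.mem_univ p)
  have hcn : ‖c n‖ ≤ C ^ n * m n := by
    have hmn := hm n hn1
    have hx : 0 ≤ ‖c n‖ / m n := div_nonneg (norm_nonneg _) hmn.le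
    have hle : ‖c n‖ / m n ≤ C ^ n := by
      have h2 := hC n hn1
      have hnne : (n : ℝ) ≠ 0 := Nat.cast_ne_zero.mpr (by omega)
      have h3 := Real.rpow_le_rpow (Real.rpow_nonneg hx _) h2 (Nat.cast_nonneg n)
      rwa [← Real.rpow_mul hx, one_div, inv_mul_cancel₀ hnne, Real.rpow_one,
        Real.rpow_natCast] at h3
    rwa [div_le_iff₀ hmn] at hle
  calc m ks.length * (ks.map m).prod ≤ ‖c n‖ :=
        le_trans hterm (habs n hn1)
    _ ≤ C ^ n * m n := hcn
    _ ≤ max C 1 ^ ks.sum * m ks.sum := by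
        exact mul_le_mul_of_nonneg_right (pow_le_pow_left₀ hC0 (le_max_left _ _) n)
          (hm n hn1).le
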